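/- Assume t ≥ 2 and a_1 = 0. Let σ₁ < σ₂ ≤ σ₃ < σ₄ be points of ArchTrop(f) with σ₂ > σ₁ + 2·log(t−1), σ₄ > σ₃ + 2·log(t−1), (σ₁, σ₂) ∩ ArchTrop(f) = ∅, and (σ₃, σ₄) ∩ ArchTrop(f) = ∅. Let m₁ ∈ {1,…,t} be the unique index with a_{m₁}·v + log|c_{m₁}| > a_i·v + log|c_i| for all i ≠ m₁ and all v ∈ (σ₁, σ₂), and let m₂ be the unique index with the analogous property on (σ₃, σ₄). Then f has exactly a_{m₂} − a_{m₁} roots ζ ∈ ℂ, counted with multiplicity, satisfying σ₂ − log(t−1) ≤ log|ζ| ≤ σ₃ + log(t−1). -/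

import Mathlib

/-- Evaluation of the univariate polynomial `f(x) = ∑ i, c i * x^{a i}` (with integer
exponents) at `x ∈ ℂ∖{0}`. -/
noncomputable def upoly {t : ℕ} (c : Fin t → ℂ) (a : Fin t → ℤ) (x : ℂ) : ℂ :=
  ∑ i, c i * x ^ a i

/-- `|c_i| e^{a_i v}`, the `i`-th tropical term of `f` at `v ∈ ℝ`. -/
noncomputable def tropTerm1 {t : ℕ} (c : Fin t → ℂ) (a : Fin t → ℤ) (v : ℝ) (i : Fin t) : ℝ :=
  ‖c i‖ * Real.exp ((a i : ℝ) * v)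

/-- `ArchTrop(f) ⊆ ℝ`: the set of `v` where the maximum of `|c_i| e^{a_i v}` is attained
at least twice. -/
noncomputable def ArchTrop1 {t : ℕ} (c : Fin t → ℂ) (a : Fin t → ℤ) : Set ℝ :=
  {v | ∃ i k : Fin t, i ≠ k ∧ (∀ l, tropTerm1 c a v l ≤ tropTerm1 c a v i) ∧
      tropTerm1 c a v i = tropTerm1 c a v k}

attribute [local instance] Classical.propDecidable

/-- `f` as a polynomial in `ℂ[x]` (exponents `a i` are nonnegative when `a_1 = 0` and
`a` is strictly increasing). -/
noncomputable def upolyP {t : ℕ} (c : Fin t → ℂ) (a : Fin t → ℤ) : Polynomial ℂ :=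
  ∑ i, Polynomial.C (c i) * Polynomial.X ^ (a i).toNat

section AuxStmt14

open Polynomial Complex Metric Set Filter intervalIntegral


open Polynomial Complex Metric Set


private lemma eval_prod_ms (s : Multiset ℂ) (z : ℂ) :
    ((s.map (fun ζ => X - C ζ)).prod).eval z = (s.map (fun ζ => z - ζ)).prod := by
  rw [eval_multiset_prod, Multiset.map_map]
  simp [Function.comp]

private lemma aux_logderiv (L : ℂ) (hL : L ≠ 0) (s : Multiset ℂ) :
    ∀ z : ℂ, (∀ ζ ∈ s, z ≠ ζ) →
      ((C L * (s.map (fun ζ => X - C ζ)).prod).derivative.eval z) /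
        ((C L * (s.map (fun ζ => X - C ζ)).prod).eval z)
      = (s.map (fun ζ => (z - ζ)⁻¹)).sum := by
  induction s using Multiset.induction with
  | empty => intro z _; simp
  | cons a s ih =>
    intro z hz
    have hza : z - a ≠ 0 := sub_ne_zero.2 (hz a (Multiset.mem_cons_self a s))
    have hzs : ∀ ζ ∈ s, z ≠ ζ := fun ζ hζ => hz ζ (Multiset.mem_cons_of_mem hζ)
    have hPz : (C L * (s.map (fun ζ => X - C ζ)).prod).eval z ≠ 0 := by
      rw [eval_mul, eval_C, eval_prod_ms]
      refine mul_ne_zero hL (Multiset.prod_ne_zero ?_)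
      simp only [Multiset.mem_map]
      rintro ⟨ζ, hζ, hζ0⟩
      exact sub_ne_zero.2 (hzs ζ hζ) hζ0
    have hrw : C L * ((a ::ₘ s).map (fun ζ => X - C ζ)).prod
        = (X - C a) * (C L * (s.map (fun ζ => X - C ζ)).prod) := by
      rw [Multiset.map_cons, Multiset.prod_cons]; ring
    have key : ∀ QQ : ℂ[X], Polynomial.eval z QQ ≠ 0 →
        (Polynomial.eval z (derivative ((X - C a) * QQ))) / Polynomial.eval z ((X - C a) * QQ)
          = (z - a)⁻¹ + Polynomial.eval z (derivative QQ) / Polynomial.eval z QQ := by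
      intro QQ hQQ
      simp only [derivative_mul, derivative_sub, derivative_X, derivative_C, sub_zero, one_mul,
        eval_add, eval_mul, eval_sub, eval_X, eval_C]
      field_simp
    rw [hrw, Multiset.map_cons, Multiset.sum_cons, key _ hPz, ih z hzs]

private lemma contOn_single {w : ℂ} {r : ℝ} (hw : ‖w‖ ≠ r) :
    ContinuousOn (fun z => (z - w)⁻¹) (sphere (0:ℂ) r) := by
  refine ContinuousOn.inv₀ (by fun_prop) ?_
  intro z hz
  have hz' : ‖z‖ = r := by
    simpa [Complex.dist_eq] using (mem_sphere.1 hz)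
  exact sub_ne_zero.2 (fun h => hw (h ▸ hz'))

private lemma contOn_sumInv (s : Multiset ℂ) {r : ℝ} (hs : ∀ ζ ∈ s, ‖ζ‖ ≠ r) :
    ContinuousOn (fun z => (s.map (fun ζ => (z - ζ)⁻¹)).sum) (sphere (0:ℂ) r) := by
  induction s using Multiset.induction with
  | empty => simp [continuousOn_const]
  | cons a s ih =>
    simp only [Multiset.map_cons, Multiset.sum_cons]
    exact (contOn_single (hs a (Multiset.mem_cons_self a s))).add
      (ih fun ζ hζ => hs ζ (Multiset.mem_cons_of_mem hζ))

private lemma circleInt_single {r : ℝ} (hr : 0 < r) {w : ℂ} (hw : ‖w‖ ≠ r) :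
    (∮ z in C(0, r), (z - w)⁻¹)
      = if ‖w‖ < r then 2 * Real.pi * Complex.I else 0 := by
  split_ifs with h
  · exact circleIntegral.integral_sub_inv_of_mem_ball (by simpa [mem_ball, Complex.dist_eq] using h)
  · have hw' : r < ‖w‖ := lt_of_le_of_ne (not_lt.1 h) (Ne.symm hw)
    refine Complex.circleIntegral_eq_zero_of_differentiable_on_off_countable hr.le
      Set.countable_empty ?_ ?_
    · refine ContinuousOn.inv₀ (by fun_prop) ?_
      intro z hz
      have hz' : ‖z‖ ≤ r := by
        simpa [Complex.dist_eq] using (mem_closedBall.1 hz)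
      exact sub_ne_zero.2 (fun hh => absurd (hh ▸ hz') (not_le.2 hw'))
    · intro z hz
      have hz' : ‖z‖ < r := by
        simpa [Complex.dist_eq] using (mem_ball.1 hz.1)
      exact (differentiableAt_id.sub_const w).inv
        (sub_ne_zero.2 (fun hh => absurd (hh ▸ hz'.le) (not_le.2 hw')))

private lemma my_integral_add {f g : ℂ → ℂ} {c : ℂ} {R : ℝ} (hf : CircleIntegrable f c R)
    (hg : CircleIntegrable g c R) :
    (∮ z in C(c, R), f z + g z) = (∮ z in C(c, R), f z) + ∮ z in C(c, R), g z := by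
  simp only [circleIntegral, smul_add, intervalIntegral.integral_add hf.out hg.out]

private lemma circleInt_sum (s : Multiset ℂ) {r : ℝ} (hr : 0 < r)
    (hs : ∀ ζ ∈ s, ‖ζ‖ ≠ r) :
    (∮ z in C(0, r), (s.map (fun ζ => (z - ζ)⁻¹)).sum)
      = 2 * Real.pi * Complex.I * ((s.filter (fun z => ‖z‖ < r)).card : ℂ) := by
  induction s using Multiset.induction with
  | empty => simp [circleIntegral]
  | cons a s ih =>
    have hs' : ∀ ζ ∈ s, ‖ζ‖ ≠ r := fun ζ hζ => hs ζ (Multiset.mem_cons_of_mem hζ)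
    have h1 : CircleIntegrable (fun z => (z - a)⁻¹) 0 r :=
      (contOn_single (hs a (Multiset.mem_cons_self a s))).circleIntegrable hr.le
    have h2 : CircleIntegrable (fun z => (s.map (fun ζ => (z - ζ)⁻¹)).sum) 0 r :=
      (contOn_sumInv s hs').circleIntegrable hr.le
    have : (∮ z in C(0, r), ((a ::ₘ s).map (fun ζ => (z - ζ)⁻¹)).sum)
        = (∮ z in C(0, r), ((z - a)⁻¹ + (s.map (fun ζ => (z - ζ)⁻¹)).sum)) := by
      apply circleIntegral.integral_congr hr.le
      intro z _; simp [Multiset.map_cons, Multiset.sum_cons]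
    rw [this, my_integral_add h1 h2, ih hs',
      circleInt_single hr (hs a (Multiset.mem_cons_self a s)), Multiset.filter_cons]
    split_ifs with h <;> simp <;> push_cast <;> ring

private lemma arg_principle (p : ℂ[X]) (hp : p ≠ 0) {r : ℝ} (hr : 0 < r)
    (hcirc : ∀ z : ℂ, ‖z‖ = r → p.eval z ≠ 0) :
    (∮ z in C(0, r), p.derivative.eval z / p.eval z)
      = 2 * Real.pi * Complex.I * ((p.roots.filter (fun z => ‖z‖ < r)).card : ℂ) := by
  have hroots : ∀ ζ ∈ p.roots, ‖ζ‖ ≠ r := by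
    intro ζ hζ h
    exact hcirc ζ h ((mem_roots hp).1 hζ)
  have heq : p = C p.leadingCoeff * (p.roots.map (fun ζ => X - C ζ)).prod :=
    Splits.eq_prod_roots (IsAlgClosed.splits p)
  have hcong : (∮ z in C(0, r), p.derivative.eval z / p.eval z)
      = ∮ z in C(0, r), (p.roots.map (fun ζ => (z - ζ)⁻¹)).sum := by
    apply circleIntegral.integral_congr hr.le
    intro z hz
    have hzr : ‖z‖ = r := by simpa [Complex.dist_eq] using (mem_sphere.1 hz)
    have hzz : ∀ ζ ∈ p.roots, z ≠ ζ := by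
      intro ζ hζ h
      exact hcirc z hzr (h ▸ ((mem_roots hp).1 hζ))
    calc p.derivative.eval z / p.eval z
        = ((C p.leadingCoeff * (p.roots.map (fun ζ => X - C ζ)).prod).derivative.eval z) /
            ((C p.leadingCoeff * (p.roots.map (fun ζ => X - C ζ)).prod).eval z) := by
          rw [← heq]
      _ = (p.roots.map (fun ζ => (z - ζ)⁻¹)).sum :=
          aux_logderiv _ (leadingCoeff_ne_zero.2 hp) _ z hzz
  rw [hcong, circleInt_sum p.roots hr hroots]


open Polynomial Complex Metric Set Filter

private lemma tropTerm1_pos {t : ℕ} {c : Fin t → ℂ} (a : Fin t → ℤ) {v : ℝ}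
    (hc : ∀ i, c i ≠ 0) (i : Fin t) : 0 < tropTerm1 c a v i := by
  have := norm_pos_iff.mpr (hc i)
  unfold tropTerm1
  positivity

private lemma trop_exp_bound {t : ℕ} {c : Fin t → ℂ} {a : Fin t → ℤ} (hc : ∀ i, c i ≠ 0)
    (ha : Function.Injective a)
    {σ σ' : ℝ} (hσ : σ < σ') {m : Fin t}
    (hm : ∀ v ∈ Set.Ioo σ σ', ∀ i, i ≠ m →
      (a i : ℝ) * v + Real.log (‖c i‖) <
        (a m : ℝ) * v + Real.log (‖c m‖))
    {v : ℝ} (hv : v ∈ Set.Ioo σ σ') {i : Fin t} (hi : i ≠ m) :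
    tropTerm1 c a v i ≤ tropTerm1 c a v m * Real.exp (-(min (v - σ) (σ' - v))) := by
  set s : ℝ := (a i : ℝ) - (a m : ℝ) with hs
  set B : ℝ := Real.log (‖c m‖) - Real.log (‖c i‖) with hB
  have hlt : ∀ w ∈ Set.Ioo σ σ', s * w < B := by
    intro w hw
    have := hm w hw i hi
    simp only [hs, hB]; linarith
  have hane : a i ≠ a m := fun h => hi (ha h)
  have hmain : s * v + min (v - σ) (σ' - v) ≤ B := by
    rcases lt_or_gt_of_ne hane with hlt' | hgt'
    · -- a i < a m, s ≤ -1, use left endpoint σ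
      have hs1 : s ≤ -1 := by
        have h0 : a i + 1 ≤ a m := hlt'
        have h0' : ((a i : ℝ) + 1 ≤ (a m : ℝ)) := by exact_mod_cast h0
        simp only [hs]; linarith
      have htend : Tendsto (fun w => s * w) (nhdsWithin σ (Set.Ioi σ)) (nhds (s * σ)) :=
        ((continuous_const.mul continuous_id).tendsto σ).mono_left nhdsWithin_le_nhds
      have hev : ∀ᶠ w in nhdsWithin σ (Set.Ioi σ), s * w ≤ B :=
        Filter.eventually_of_mem (Ioo_mem_nhdsGT_of_mem ⟨le_refl σ, hσ⟩)
          (fun w hw => (hlt w hw).le)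
      have hBσ : s * σ ≤ B := le_of_tendsto htend hev
      have h1 : min (v - σ) (σ' - v) ≤ v - σ := min_le_left _ _
      nlinarith [hv.1, hv.2]
    · -- a i > a m, s ≥ 1, use right endpoint σ'
      have hs1 : 1 ≤ s := by
        have h0 : a m + 1 ≤ a i := hgt'
        have h0' : ((a m : ℝ) + 1 ≤ (a i : ℝ)) := by exact_mod_cast h0
        simp only [hs]; linarith
      have htend : Tendsto (fun w => s * w) (nhdsWithin σ' (Set.Iio σ')) (nhds (s * σ')) :=
        ((continuous_const.mul continuous_id).tendsto σ').mono_left nhdsWithin_le_nhds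
      have hev : ∀ᶠ w in nhdsWithin σ' (Set.Iio σ'), s * w ≤ B :=
        Filter.eventually_of_mem (Ioo_mem_nhdsLT_of_mem ⟨hσ, le_refl σ'⟩)
          (fun w hw => (hlt w hw).le)
      have hBσ : s * σ' ≤ B := le_of_tendsto htend hev
      have h1 : min (v - σ) (σ' - v) ≤ σ' - v := min_le_right _ _
      nlinarith [hv.1, hv.2]
  -- exponentiate
  have hci := norm_pos_iff.mpr (hc i)
  have hcm := norm_pos_iff.mpr (hc m)
  have e1 : tropTerm1 c a v i = Real.exp (Real.log (‖c i‖) + (a i : ℝ) * v) := by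
    rw [Real.exp_add, Real.exp_log hci]; rfl
  have e2 : tropTerm1 c a v m * Real.exp (-(min (v - σ) (σ' - v)))
      = Real.exp (Real.log (‖c m‖) + (a m : ℝ) * v - min (v - σ) (σ' - v)) := by
    unfold tropTerm1
    rw [show Real.log (‖c m‖) + (a m : ℝ) * v - min (v - σ) (σ' - v)
        = (Real.log (‖c m‖) + (a m : ℝ) * v) + (-(min (v - σ) (σ' - v))) by ring,
      Real.exp_add, Real.exp_add, Real.exp_log hcm]
  rw [e1, e2]
  apply Real.exp_le_exp.2
  simp only [hs, hB] at hmain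
  linarith

private lemma trop_sum_lt {t : ℕ} {c : Fin t → ℂ} {a : Fin t → ℤ} (ht : 2 ≤ t)
    (hc : ∀ i, c i ≠ 0) (ha : Function.Injective a)
    {σ σ' : ℝ} (hσ : σ < σ') {m : Fin t}
    (hm : ∀ v ∈ Set.Ioo σ σ', ∀ i, i ≠ m →
      (a i : ℝ) * v + Real.log (‖c i‖) <
        (a m : ℝ) * v + Real.log (‖c m‖))
    {v : ℝ} (hv : v ∈ Set.Ioo σ σ')
    (hL : Real.log ((t : ℝ) - 1) < min (v - σ) (σ' - v)) :
    ∑ i ∈ Finset.univ.erase m, tropTerm1 c a v i < tropTerm1 c a v m := by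
  have ht1 : (1 : ℝ) ≤ (t : ℝ) - 1 := by
    have : (2 : ℝ) ≤ (t : ℝ) := by exact_mod_cast ht
    linarith
  have hbound : ∀ i ∈ Finset.univ.erase m,
      tropTerm1 c a v i ≤ tropTerm1 c a v m * Real.exp (-(min (v - σ) (σ' - v))) := by
    intro i hi
    exact trop_exp_bound hc ha hσ hm hv (Finset.ne_of_mem_erase hi)
  have hcard : (Finset.univ.erase m).card = t - 1 := by
    rw [Finset.card_erase_of_mem (Finset.mem_univ m), Finset.card_univ, Fintype.card_fin]
  have hsum := Finset.sum_le_card_nsmul _ _ _ hbound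
  rw [hcard] at hsum
  have hterm := tropTerm1_pos (v := v) a hc m
  have hexp : Real.exp (-(min (v - σ) (σ' - v))) < ((t : ℝ) - 1)⁻¹ := by
    rw [show ((t : ℝ) - 1)⁻¹ = Real.exp (-(Real.log ((t : ℝ) - 1))) by
      rw [Real.exp_neg, Real.exp_log (by linarith)]]
    exact Real.exp_lt_exp.2 (by linarith)
  have hc1 : ((t - 1 : ℕ) : ℝ) = (t : ℝ) - 1 := by
    have : (1 : ℕ) ≤ t := by omega
    push_cast [this]
    ring
  calc ∑ i ∈ Finset.univ.erase m, tropTerm1 c a v i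
      ≤ (t - 1) • (tropTerm1 c a v m * Real.exp (-(min (v - σ) (σ' - v)))) := hsum
    _ = ((t : ℝ) - 1) * (tropTerm1 c a v m * Real.exp (-(min (v - σ) (σ' - v)))) := by
        rw [nsmul_eq_mul, hc1]
    _ < ((t : ℝ) - 1) * (tropTerm1 c a v m * ((t : ℝ) - 1)⁻¹) := by
        apply mul_lt_mul_of_pos_left _ (by linarith)
        exact mul_lt_mul_of_pos_left hexp hterm
    _ = tropTerm1 c a v m := by
        field_simp



open Polynomial Complex Metric Set

private lemma eval_upolyP {t : ℕ} (c : Fin t → ℂ) (a : Fin t → ℤ) (z : ℂ) :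
    (upolyP c a).eval z = ∑ i, c i * z ^ (a i).toNat := by
  simp [upolyP, eval_finset_sum]

private lemma abs_monomial {t : ℕ} (c : Fin t → ℂ) (a : Fin t → ℤ) (hnn : ∀ i, 0 ≤ a i)
    {v : ℝ} {z : ℂ} (hz : ‖z‖ = Real.exp v) (i : Fin t) :
    ‖c i * z ^ (a i).toNat‖ = tropTerm1 c a v i := by
  have hcast : (((a i).toNat : ℕ) : ℝ) = (a i : ℝ) := by
    have := Int.toNat_of_nonneg (hnn i)
    exact_mod_cast congrArg (Int.cast : ℤ → ℝ) this
  rw [norm_mul, norm_pow, hz, ← Real.exp_nat_mul]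
  unfold tropTerm1
  rw [hcast]

private lemma eval_sub_monomial_bound {t : ℕ} (c : Fin t → ℂ) (a : Fin t → ℤ)
    (hnn : ∀ i, 0 ≤ a i) {v : ℝ} {z : ℂ} (hz : ‖z‖ = Real.exp v) (m : Fin t) :
    ‖(upolyP c a).eval z - c m * z ^ (a m).toNat‖
      ≤ ∑ i ∈ Finset.univ.erase m, tropTerm1 c a v i := by
  have hsplit : (upolyP c a).eval z - c m * z ^ (a m).toNat
      = ∑ i ∈ Finset.univ.erase m, c i * z ^ (a i).toNat := by
    rw [eval_upolyP, ← Finset.sum_erase_add Finset.univ _ (Finset.mem_univ m)]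
    ring
  rw [hsplit]
  refine le_trans (norm_sum_le _ _) (le_of_eq ?_)
  exact Finset.sum_congr rfl fun i _ => abs_monomial c a hnn hz i

private lemma eval_ne_zero_of_dom {t : ℕ} (c : Fin t → ℂ) (a : Fin t → ℤ)
    (hnn : ∀ i, 0 ≤ a i) {v : ℝ} {z : ℂ} (hz : ‖z‖ = Real.exp v) {m : Fin t}
    (hlt : ∑ i ∈ Finset.univ.erase m, tropTerm1 c a v i < tropTerm1 c a v m) :
    (upolyP c a).eval z ≠ 0 := by
  intro h0
  have h1 := eval_sub_monomial_bound c a hnn hz m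
  rw [h0, zero_sub, norm_neg, abs_monomial c a hnn hz m] at h1
  exact absurd (lt_of_le_of_lt h1 hlt) (lt_irrefl _)

private lemma monomial_root_count {c : ℂ} (hc : c ≠ 0) (n : ℕ) {r : ℝ} (hr : 0 < r) :
    ((Polynomial.C c * Polynomial.X ^ n).roots.filter
      (fun z => ‖z‖ < r)).card = n := by
  rw [Polynomial.roots_C_mul_X_pow hc n, Multiset.nsmul_singleton]
  rw [Multiset.filter_eq_self.2 ?_, Multiset.card_replicate]
  intro b hb
  rw [Multiset.eq_of_mem_replicate hb]
  simpa using hr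


open Polynomial Complex Metric Set intervalIntegral

private lemma rouche_slit {p q : ℂ} (hq : q ≠ 0) (h : ‖p - q‖ < ‖q‖) :
    p / q ∈ Complex.slitPlane := by
  have h1 : ‖p / q - 1‖ < 1 := by
    rw [div_sub_one hq, norm_div]
    exact (div_lt_one (norm_pos_iff.mpr hq)).2 h
  have h2 : (1 - p / q).re ≤ ‖1 - p / q‖ := Complex.re_le_norm _
  rw [show (1 : ℂ) - p / q = -(p / q - 1) by ring, norm_neg] at h2
  refine Complex.mem_slitPlane_iff.2 (Or.inl ?_)
  have h3 : (-(p / q - 1)).re = 1 - (p / q).re := by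
    simp [Complex.neg_re, Complex.sub_re]
  rw [h3] at h2
  linarith

private lemma rouche (p q : ℂ[X]) {r : ℝ} (hr : 0 < r)
    (h : ∀ z : ℂ, ‖z‖ = r →
      ‖p.eval z - q.eval z‖ < ‖q.eval z‖) :
    (∮ z in C(0, r), p.derivative.eval z / p.eval z)
      = ∮ z in C(0, r), q.derivative.eval z / q.eval z := by
  have hq0 : ∀ z : ℂ, ‖z‖ = r → q.eval z ≠ 0 := by
    intro z hz hq
    have := h z hz
    rw [hq, norm_zero] at this
    exact (norm_nonneg _).not_gt this
  have hp0 : ∀ z : ℂ, ‖z‖ = r → p.eval z ≠ 0 := by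
    intro z hz hp
    have := h z hz
    rw [hp, zero_sub, norm_neg] at this
    exact lt_irrefl _ this
  set γ := circleMap 0 r with hγ
  have habs : ∀ θ : ℝ, ‖γ θ‖ = r := fun θ => by
    simp [hγ, norm_circleMap_zero, abs_of_pos hr]
  set fp : ℝ → ℂ := fun θ => p.derivative.eval (γ θ) / p.eval (γ θ) with hfp
  set fq : ℝ → ℂ := fun θ => q.derivative.eval (γ θ) / q.eval (γ θ) with hfq
  have hcγ : Continuous γ := continuous_circleMap 0 r
  have hcont_p : Continuous fp :=
    (p.derivative.continuous.comp hcγ).div (p.continuous.comp hcγ)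
      (fun θ => hp0 (γ θ) (habs θ))
  have hcont_q : Continuous fq :=
    (q.derivative.continuous.comp hcγ).div (q.continuous.comp hcγ)
      (fun θ => hq0 (γ θ) (habs θ))
  have key : ∀ θ : ℝ, HasDerivAt (fun θ => Complex.log (p.eval (γ θ) / q.eval (γ θ)))
      ((fp θ - fq θ) * (γ θ * Complex.I)) θ := by
    intro θ
    have hpz := hp0 (γ θ) (habs θ)
    have hqz := hq0 (γ θ) (habs θ)
    have hγd : HasDerivAt γ (γ θ * Complex.I) θ := hasDerivAt_circleMap 0 r θ
    have hpd : HasDerivAt (fun z => p.eval z) (p.derivative.eval (γ θ)) (γ θ) :=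
      p.hasDerivAt (γ θ)
    have hqd : HasDerivAt (fun z => q.eval z) (q.derivative.eval (γ θ)) (γ θ) :=
      q.hasDerivAt (γ θ)
    have hdiv : HasDerivAt (fun z => p.eval z / q.eval z)
        ((p.derivative.eval (γ θ) * q.eval (γ θ) - p.eval (γ θ) * q.derivative.eval (γ θ)) /
          (q.eval (γ θ)) ^ 2) (γ θ) := hpd.div hqd hqz
    have hslit : p.eval (γ θ) / q.eval (γ θ) ∈ Complex.slitPlane :=
      rouche_slit hqz (h (γ θ) (habs θ))
    have hlog : HasDerivAt Complex.log (p.eval (γ θ) / q.eval (γ θ))⁻¹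
        (p.eval (γ θ) / q.eval (γ θ)) := Complex.hasDerivAt_log hslit
    have hcomp := (hlog.comp (γ θ) hdiv).comp θ hγd
    refine hcomp.congr_deriv ?_
    simp only [hfp, hfq, Function.comp]
    field_simp
  have hDcont : Continuous (fun θ => (fp θ - fq θ) * (γ θ * Complex.I)) :=
    (hcont_p.sub hcont_q).mul (hcγ.mul continuous_const)
  have hint0 : ∫ θ in (0:ℝ)..2 * Real.pi, (fp θ - fq θ) * (γ θ * Complex.I) = 0 := by
    rw [intervalIntegral.integral_eq_sub_of_hasDerivAt (fun θ _ => key θ)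
      (hDcont.intervalIntegrable 0 (2 * Real.pi))]
    have hper : γ (2 * Real.pi) = γ 0 := by
      have := periodic_circleMap 0 r 0
      simpa [hγ] using this
    rw [hper, sub_self]
  have e1 : (∮ z in C(0, r), p.derivative.eval z / p.eval z)
      = ∫ θ in (0:ℝ)..2 * Real.pi, (γ θ * Complex.I) * fp θ := by
    simp only [circleIntegral, deriv_circleMap, smul_eq_mul, hγ, hfp]
  have e2 : (∮ z in C(0, r), q.derivative.eval z / q.eval z)
      = ∫ θ in (0:ℝ)..2 * Real.pi, (γ θ * Complex.I) * fq θ := by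
    simp only [circleIntegral, deriv_circleMap, smul_eq_mul, hγ, hfq]
  rw [e1, e2, ← sub_eq_zero, ← intervalIntegral.integral_sub (f := fun θ => γ θ * Complex.I * fp θ)
    (g := fun θ => γ θ * Complex.I * fq θ)
    (((hcγ.mul continuous_const).mul hcont_p).intervalIntegrable _ _)
    (((hcγ.mul continuous_const).mul hcont_q).intervalIntegrable _ _), ← hint0]
  congr 1
  funext θ
  ring

end AuxStmt14

/-- Given points `σ₁ < σ₂ ≤ σ₃ < σ₄` of `ArchTrop(f)` with wide empty gaps `(σ₁,σ₂)` and
`(σ₃,σ₄)`, and dominating indices `m₁` on `(σ₁,σ₂)` and `m₂` on `(σ₃,σ₄)`, the number of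
roots of `f` (with multiplicity) with `σ₂ - log(t-1) ≤ log|ζ| ≤ σ₃ + log(t-1)` is exactly
`a_{m₂} - a_{m₁}`. -/
theorem stmt14 {t : ℕ} (ht : 2 ≤ t)
    (c : Fin t → ℂ) (a : Fin t → ℤ) (ha : StrictMono a) (hc : ∀ i, c i ≠ 0)
    (ha0 : a ⟨0, by omega⟩ = 0)
    (σ₁ σ₂ σ₃ σ₄ : ℝ)
    (h12 : σ₁ < σ₂) (h23 : σ₂ ≤ σ₃) (h34 : σ₃ < σ₄)
    (hσ₁ : σ₁ ∈ ArchTrop1 c a) (hσ₂ : σ₂ ∈ ArchTrop1 c a)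
    (hσ₃ : σ₃ ∈ ArchTrop1 c a) (hσ₄ : σ₄ ∈ ArchTrop1 c a)
    (hgap₁ : σ₁ + 2 * Real.log ((t : ℝ) - 1) < σ₂)
    (hgap₂ : σ₃ + 2 * Real.log ((t : ℝ) - 1) < σ₄)
    (hempty₁ : Set.Ioo σ₁ σ₂ ∩ ArchTrop1 c a = ∅)
    (hempty₂ : Set.Ioo σ₃ σ₄ ∩ ArchTrop1 c a = ∅)
    (m₁ m₂ : Fin t)
    (hm₁ : ∀ v ∈ Set.Ioo σ₁ σ₂, ∀ i, i ≠ m₁ →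
      (a i : ℝ) * v + Real.log (‖c i‖) <
        (a m₁ : ℝ) * v + Real.log (‖c m₁‖))
    (hm₂ : ∀ v ∈ Set.Ioo σ₃ σ₄, ∀ i, i ≠ m₂ →
      (a i : ℝ) * v + Real.log (‖c i‖) <
        (a m₂ : ℝ) * v + Real.log (‖c m₂‖)) :
    ((upolyP c a).roots.filter
        (fun z => σ₂ - Real.log ((t : ℝ) - 1) ≤ Real.log (‖z‖) ∧
          Real.log (‖z‖) ≤ σ₃ + Real.log ((t : ℝ) - 1))).card
      = (a m₂).toNat - (a m₁).toNat := by
  have ht1 : (1 : ℝ) ≤ (t : ℝ) - 1 := by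
    have : (2 : ℝ) ≤ (t : ℝ) := by exact_mod_cast ht
    linarith
  set L := Real.log ((t : ℝ) - 1) with hLdef
  have hL0 : 0 ≤ L := Real.log_nonneg ht1
  have hainj : Function.Injective a := ha.injective
  set i0 : Fin t := ⟨0, by omega⟩ with hi0
  have hnn : ∀ i, 0 ≤ a i := by
    intro i
    have h1 : i0 ≤ i := by simp [hi0, Fin.le_def]
    have := ha.monotone h1
    omega
  set p := upolyP c a with hpdef
  set v₁ := (σ₁ + σ₂) / 2 with hv₁
  set v₂ := (σ₃ + σ₄) / 2 with hv₂
  set r₁ := Real.exp v₁ with hr₁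
  set r₂ := Real.exp v₂ with hr₂
  have hr₁pos : 0 < r₁ := Real.exp_pos v₁
  have hr₂pos : 0 < r₂ := Real.exp_pos v₂
  have hdom₁ : ∀ v : ℝ, v ∈ Set.Ioo σ₁ σ₂ → L < min (v - σ₁) (σ₂ - v) →
      ∑ i ∈ Finset.univ.erase m₁, tropTerm1 c a v i < tropTerm1 c a v m₁ :=
    fun v hv hmin => trop_sum_lt ht hc hainj h12 hm₁ hv hmin
  have hdom₂ : ∀ v : ℝ, v ∈ Set.Ioo σ₃ σ₄ → L < min (v - σ₃) (σ₄ - v) →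
      ∑ i ∈ Finset.univ.erase m₂, tropTerm1 c a v i < tropTerm1 c a v m₂ :=
    fun v hv hmin => trop_sum_lt ht hc hainj h34 hm₂ hv hmin
  have hv₁mem : v₁ ∈ Set.Ioo σ₁ σ₂ := ⟨by simp only [hv₁]; linarith, by simp only [hv₁]; linarith⟩
  have hv₂mem : v₂ ∈ Set.Ioo σ₃ σ₄ := ⟨by simp only [hv₂]; linarith, by simp only [hv₂]; linarith⟩
  have hmin₁ : L < min (v₁ - σ₁) (σ₂ - v₁) :=
    lt_min (by simp only [hv₁]; linarith) (by simp only [hv₁]; linarith)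
  have hmin₂ : L < min (v₂ - σ₃) (σ₄ - v₂) :=
    lt_min (by simp only [hv₂]; linarith) (by simp only [hv₂]; linarith)
  have hcirc₁ : ∀ z : ℂ, ‖z‖ = r₁ → p.eval z ≠ 0 :=
    fun z hz => eval_ne_zero_of_dom c a hnn hz (hdom₁ v₁ hv₁mem hmin₁)
  have hcirc₂ : ∀ z : ℂ, ‖z‖ = r₂ → p.eval z ≠ 0 :=
    fun z hz => eval_ne_zero_of_dom c a hnn hz (hdom₂ v₂ hv₂mem hmin₂)
  have hpne : p ≠ 0 := by
    intro h
    have habs : ‖((r₁ : ℝ) : ℂ)‖ = r₁ := by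
      rw [Complex.norm_real, Real.norm_eq_abs, abs_of_pos hr₁pos]
    exact hcirc₁ _ habs (by rw [h, Polynomial.eval_zero])
  -- count inside circle of radius r₁
  have h2πi : (2 * (Real.pi : ℂ) * Complex.I) ≠ 0 := by
    simp [Real.pi_ne_zero, Complex.I_ne_zero]
  have hcount : ∀ (m : Fin t) (r : ℝ) (hr : 0 < r) (v : ℝ) (hre : r = Real.exp v)
      (hcircm : ∀ z : ℂ, ‖z‖ = r → p.eval z ≠ 0)
      (hdm : ∑ i ∈ Finset.univ.erase m, tropTerm1 c a v i < tropTerm1 c a v m),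
      ((p.roots.filter (fun z => ‖z‖ < r)).card) = (a m).toNat := by
    intro m r hr v hre hcircm hdm
    set q : Polynomial ℂ := Polynomial.C (c m) * Polynomial.X ^ (a m).toNat with hq
    have hqne : q ≠ 0 := by
      rw [hq]
      exact mul_ne_zero (by simpa using hc m) (pow_ne_zero _ Polynomial.X_ne_zero)
    have hqeval : ∀ z : ℂ, q.eval z = c m * z ^ (a m).toNat := by
      intro z; simp [hq]
    have hqcirc : ∀ z : ℂ, ‖z‖ = r → q.eval z ≠ 0 := by
      intro z hz
      rw [hqeval]
      have hz0 : z ≠ 0 := by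
        intro h; rw [h] at hz; simp at hz; exact absurd hz.symm hr.ne'
      exact mul_ne_zero (hc m) (pow_ne_zero _ hz0)
    have hrou : ∀ z : ℂ, ‖z‖ = r →
        ‖p.eval z - q.eval z‖ < ‖q.eval z‖ := by
      intro z hz
      have hz' : ‖z‖ = Real.exp v := by rw [hz, hre]
      rw [hqeval, abs_monomial c a hnn hz' m]
      exact lt_of_le_of_lt (eval_sub_monomial_bound c a hnn hz' m) hdm
    have h1 := arg_principle p hpne hr hcircm
    have h2 := rouche p q hr hrou
    have h3 := arg_principle q hqne hr hqcirc
    have h4 : ((q.roots.filter (fun z => ‖z‖ < r)).card) = (a m).toNat := by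
      rw [hq]; exact monomial_root_count (hc m) (a m).toNat hr
    rw [h1, h3, h4] at h2
    have := mul_left_cancel₀ h2πi h2
    exact_mod_cast this
  have hcount₁ := hcount m₁ r₁ hr₁pos v₁ rfl hcirc₁ (hdom₁ v₁ hv₁mem hmin₁)
  have hcount₂ := hcount m₂ r₂ hr₂pos v₂ rfl hcirc₂ (hdom₂ v₂ hv₂mem hmin₂)
  -- 0 is not a root
  have h0 : p.eval 0 ≠ 0 := by
    rw [hpdef, eval_upolyP]
    have hsum : ∑ i, c i * (0 : ℂ) ^ (a i).toNat = c i0 := by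
      rw [Finset.sum_eq_single i0]
      · have hn0 : (a i0).toNat = 0 := by rw [show a i0 = 0 from ha0]; rfl
        simp [hn0]
      · intro b _ hb
        have hlt : i0 < b := by
          have : b.1 ≠ 0 := fun h => hb (Fin.ext h)
          simp only [hi0, Fin.lt_def]
          omega
        have hab : 0 < a b := by
          have := ha hlt
          rw [show a i0 = 0 from ha0] at this
          exact this
        have : (a b).toNat ≠ 0 := by omega
        simp [zero_pow this]
      · intro h; exact absurd (Finset.mem_univ i0) h
    rw [hsum]
    exact hc i0
  have hz0 : ∀ z ∈ p.roots, z ≠ 0 := by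
    intro z hz h
    apply h0
    have := (Polynomial.mem_roots hpne).1 hz
    rwa [h] at this
  -- no roots in the two forbidden open annuli
  have hnr₁ : ∀ z ∈ p.roots, ¬(σ₁ + L < Real.log (‖z‖) ∧
      Real.log (‖z‖) < σ₂ - L) := by
    rintro z hz ⟨h1, h2⟩
    have hz0' := hz0 z hz
    have habs : ‖z‖ = Real.exp (Real.log (‖z‖)) :=
      (Real.exp_log (norm_pos_iff.mpr hz0')).symm
    have hw : Real.log (‖z‖) ∈ Set.Ioo σ₁ σ₂ := ⟨by linarith, by linarith⟩
    have hmin : L < min (Real.log (‖z‖) - σ₁) (σ₂ - Real.log (‖z‖)) :=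
      lt_min (by linarith) (by linarith)
    exact eval_ne_zero_of_dom c a hnn habs (hdom₁ _ hw hmin) ((Polynomial.mem_roots hpne).1 hz)
  have hnr₂ : ∀ z ∈ p.roots, ¬(σ₃ + L < Real.log (‖z‖) ∧
      Real.log (‖z‖) < σ₄ - L) := by
    rintro z hz ⟨h1, h2⟩
    have hz0' := hz0 z hz
    have habs : ‖z‖ = Real.exp (Real.log (‖z‖)) :=
      (Real.exp_log (norm_pos_iff.mpr hz0')).symm
    have hw : Real.log (‖z‖) ∈ Set.Ioo σ₃ σ₄ := ⟨by linarith, by linarith⟩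
    have hmin : L < min (Real.log (‖z‖) - σ₃) (σ₄ - Real.log (‖z‖)) :=
      lt_min (by linarith) (by linarith)
    exact eval_ne_zero_of_dom c a hnn habs (hdom₂ _ hw hmin) ((Polynomial.mem_roots hpne).1 hz)
  -- geometry of the radii
  have hσ₁v₁ : σ₁ + L < v₁ := by simp only [hv₁]; linarith
  have hv₁σ₂ : v₁ < σ₂ - L := by simp only [hv₁]; linarith
  have hσ₃v₂ : σ₃ + L < v₂ := by simp only [hv₂]; linarith
  have hv₂σ₄ : v₂ < σ₄ - L := by simp only [hv₂]; linarith
  -- equivalence of the two filters on roots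
  have hQA : ∀ z ∈ p.roots,
      ((σ₂ - L ≤ Real.log (‖z‖) ∧ Real.log (‖z‖) ≤ σ₃ + L)
        ↔ (r₁ ≤ ‖z‖ ∧ ‖z‖ < r₂)) := by
    intro z hz
    have hz0' := hz0 z hz
    have hpos := norm_pos_iff.mpr hz0'
    have habs : ‖z‖ = Real.exp (Real.log (‖z‖)) :=
      (Real.exp_log hpos).symm
    have e1 : (r₁ ≤ ‖z‖) ↔ v₁ ≤ Real.log (‖z‖) := by
      rw [habs, hr₁, Real.exp_le_exp]
      simp [Real.log_exp]
    have e2 : (‖z‖ < r₂) ↔ Real.log (‖z‖) < v₂ := by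
      rw [habs, hr₂, Real.exp_lt_exp]
      simp [Real.log_exp]
    rw [e1, e2]
    constructor
    · rintro ⟨hq1, hq2⟩
      exact ⟨by linarith, by linarith⟩
    · rintro ⟨ha1, ha2⟩
      constructor
      · by_contra hcon
        push_neg at hcon
        exact hnr₁ z hz ⟨by linarith, by linarith⟩
      · by_contra hcon
        push_neg at hcon
        exact hnr₂ z hz ⟨by linarith, by linarith⟩
  have hfQA : p.roots.filter (fun z => σ₂ - L ≤ Real.log (‖z‖) ∧
        Real.log (‖z‖) ≤ σ₃ + L)
      = p.roots.filter (fun z => r₁ ≤ ‖z‖ ∧ ‖z‖ < r₂) :=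
    Multiset.filter_congr hQA
  have hff1 : (p.roots.filter (fun z => ‖z‖ < r₂)).filter
        (fun z => r₁ ≤ ‖z‖)
      = p.roots.filter (fun z => r₁ ≤ ‖z‖ ∧ ‖z‖ < r₂) := by
    rw [Multiset.filter_filter]
  have hr₁r₂ : r₁ ≤ r₂ := Real.exp_le_exp.2 (by linarith)
  have hff2 : (p.roots.filter (fun z => ‖z‖ < r₂)).filter
        (fun z => ¬ r₁ ≤ ‖z‖)
      = p.roots.filter (fun z => ‖z‖ < r₁) := by
    rw [Multiset.filter_filter]
    refine Multiset.filter_congr fun z hz => ?_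
    constructor
    · rintro ⟨h1, _⟩; exact not_le.1 h1
    · intro h1; exact ⟨not_le.2 h1, lt_of_lt_of_le h1 hr₁r₂⟩
  have hsum := congrArg Multiset.card
    (Multiset.filter_add_not (fun z => r₁ ≤ ‖z‖)
      (p.roots.filter (fun z => ‖z‖ < r₂)))
  rw [Multiset.card_add, hff1, hff2] at hsum
  have hgoal : ((upolyP c a).roots.filter
      (fun z => σ₂ - Real.log ((t : ℝ) - 1) ≤ Real.log (‖z‖) ∧
        Real.log (‖z‖) ≤ σ₃ + Real.log ((t : ℝ) - 1))).card
      = (p.roots.filter (fun z => r₁ ≤ ‖z‖ ∧ ‖z‖ < r₂)).card := by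
    rw [← hfQA]
  rw [hgoal]
  omega
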